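/- arXiv:1506.06436 — 2 statements merged into one kernel-verified Lean document; each statement's English description precedes it below -/
import Mathlib

section
/- The series ℋ(u) is a formal power series in z with coefficients in ℤ[u,a] of the form ℋ(u) = 1 + za + O(z²), and ℐ(u) is a formal power series in z with coefficients in ℤ[u,a] of the form ℐ(u) = z⁴(1 − a − u + ua) + O(z⁵); consequently the sum Σ_{n=0}^∞ ℋ(uΛ^{2n}) · Π_{k=0}^{n−1} ℐ(uΛ^{2k}) converges as a formal power series in z with coefficients in ℤ[u,a]. -/
namespace PrudentAdsorption

/-- A point of the square lattice `ℤ²`. -/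
abbrev Pt : Type := ℤ × ℤ

/-- Nearest-neighbour adjacency on the square lattice. -/
def adj (p q : Pt) : Prop := (q.1 - p.1).natAbs + (q.2 - p.2).natAbs = 1

/-- An `n`-step nearest-neighbour walk on `ℤ²` starting at the origin. -/
structure Walk (n : ℕ) where
  pts : Fin (n + 1) → Pt
  start_eq : pts 0 = (0, 0)
  adj_step : ∀ k : Fin n, adj (pts k.castSucc) (pts k.succ)

namespace Walk

variable {n : ℕ}

/-- The `x`-coordinates of the prefix of the walk up to time `k`. -/
def xset (W : Walk n) (k : Fin (n + 1)) : Finset ℤ :=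
  (Finset.Iic k).image fun m => (W.pts m).1

/-- The `y`-coordinates of the prefix of the walk up to time `k`. -/
def yset (W : Walk n) (k : Fin (n + 1)) : Finset ℤ :=
  (Finset.Iic k).image fun m => (W.pts m).2

lemma xset_nonempty (W : Walk n) (k : Fin (n + 1)) : (W.xset k).Nonempty :=
  ⟨(W.pts k).1, Finset.mem_image.2 ⟨k, Finset.mem_Iic.2 le_rfl, rfl⟩⟩

lemma yset_nonempty (W : Walk n) (k : Fin (n + 1)) : (W.yset k).Nonempty :=
  ⟨(W.pts k).2, Finset.mem_image.2 ⟨k, Finset.mem_Iic.2 le_rfl, rfl⟩⟩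

/-- Right side of the bounding box of the prefix up to time `k`. -/
def xmax (W : Walk n) (k : Fin (n + 1)) : ℤ := (W.xset k).max' (W.xset_nonempty k)

/-- Left (west) side of the bounding box of the prefix up to time `k`. -/
def xmin (W : Walk n) (k : Fin (n + 1)) : ℤ := (W.xset k).min' (W.xset_nonempty k)

/-- Top (north) side of the bounding box of the prefix up to time `k`. -/
def ymax (W : Walk n) (k : Fin (n + 1)) : ℤ := (W.yset k).max' (W.yset_nonempty k)

/-- Bottom (south) side of the bounding box of the prefix up to time `k`. -/
def ymin (W : Walk n) (k : Fin (n + 1)) : ℤ := (W.yset k).min' (W.yset_nonempty k)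

/-- Endpoint of the walk. -/
def endPt (W : Walk n) : Pt := W.pts (Fin.last n)

/-- A walk is prudent if it never takes a step towards an already visited vertex:
the half-line extending each step contains no previously visited vertex. -/
def Prudent (W : Walk n) : Prop :=
  ∀ k : Fin n, ∀ t : ℤ, 1 ≤ t → ∀ m : Fin (n + 1), m ≤ k.castSucc →
    W.pts m ≠ W.pts k.castSucc + t • (W.pts k.succ - W.pts k.castSucc)

/-- The walk stays in the half-plane `y ≥ 0` above the impenetrable surface. -/
def HalfPlane (W : Walk n) : Prop := ∀ m : Fin (n + 1), 0 ≤ (W.pts m).2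

/-- A walk is 2-sided if every prefix ends on the north or east side of
its bounding box. -/
def TwoSided (W : Walk n) : Prop :=
  ∀ k : Fin (n + 1), (W.pts k).2 = W.ymax k ∨ (W.pts k).1 = W.xmax k

/-- Every prefix ends on the north, east or west side of its bounding box. -/
def ThreeSidedEnds (W : Walk n) : Prop :=
  ∀ k : Fin (n + 1), (W.pts k).2 = W.ymax k ∨ (W.pts k).1 = W.xmax k ∨
    (W.pts k).1 = W.xmin k

/-- The walk never steps between the SE and SW corners of its (current) bounding
box when the box has width one. -/
def NoBaseStep (W : Walk n) : Prop :=
  ∀ k : Fin n,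
    ¬(W.xmax k.succ = W.xmin k.succ + 1 ∧
      (W.pts k.castSucc).2 = W.ymin k.succ ∧ (W.pts k.succ).2 = W.ymin k.succ ∧
      (((W.pts k.castSucc).1 = W.xmin k.succ ∧ (W.pts k.succ).1 = W.xmax k.succ) ∨
        ((W.pts k.castSucc).1 = W.xmax k.succ ∧ (W.pts k.succ).1 = W.xmin k.succ)))

/-- A walk is 3-sided if every prefix ends on the north, east or west side
of its bounding box, and it never steps between the SE and SW corners of the
box when the box has width one. -/
def ThreeSided (W : Walk n) : Prop := W.ThreeSidedEnds ∧ W.NoBaseStep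

/-- The number of steps of the walk lying along the surface `y = 0`. -/
def surfSteps (W : Walk n) : ℕ :=
  (Finset.univ.filter fun k : Fin n =>
    (W.pts k.castSucc).2 = 0 ∧ (W.pts k.succ).2 = 0).card

end Walk

/-- A 2-sided prudent walk above the impenetrable surface. -/
def Is2Sided {n : ℕ} (W : Walk n) : Prop := W.Prudent ∧ W.HalfPlane ∧ W.TwoSided

/-- A 3-sided prudent walk above the impenetrable surface. -/
def Is3Sided {n : ℕ} (W : Walk n) : Prop := W.Prudent ∧ W.HalfPlane ∧ W.ThreeSided

/-- `R_{n,i,j,ν}`: number of `n`-step 2-sided prudent walks above the surface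
ending on the right side of their bounding box, with `i` the distance from the
endpoint to the top of the box, `j` the height of the endpoint above the
surface and `ν` steps along the surface. -/
noncomputable def Rcount (n i j ν : ℕ) : ℕ :=
  Nat.card {W : Walk n // Is2Sided W ∧ (W.endPt).1 = W.xmax (Fin.last n) ∧
    W.ymax (Fin.last n) - (W.endPt).2 = (i : ℤ) ∧ (W.endPt).2 = (j : ℤ) ∧
    W.surfSteps = ν}

/-- `T_{n,i,j,ν}`: number of `n`-step 2-sided prudent walks above the surface
ending on the top side of their bounding box, with `i` the distance from the
endpoint to the right of the box, `j` the height of the endpoint above the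
surface and `ν` steps along the surface. -/
noncomputable def Tcount (n i j ν : ℕ) : ℕ :=
  Nat.card {W : Walk n // Is2Sided W ∧ (W.endPt).2 = W.ymax (Fin.last n) ∧
    W.xmax (Fin.last n) - (W.endPt).1 = (i : ℤ) ∧ (W.endPt).2 = (j : ℤ) ∧
    W.surfSteps = ν}

/-- `W_{n,i,j,ν}`: number of `n`-step 2-sided prudent walks above the surface
ending a distance `i` from the NE corner of their bounding box and a distance
`j` above the surface, with `ν` steps along the surface. -/
noncomputable def Wcount (n i j ν : ℕ) : ℕ :=
  Nat.card {W : Walk n // Is2Sided W ∧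
    (W.xmax (Fin.last n) - (W.endPt).1) + (W.ymax (Fin.last n) - (W.endPt).2) = (i : ℤ) ∧
    (W.endPt).2 = (j : ℤ) ∧ W.surfSteps = ν}

/-- The coefficient ring `ℤ[u,v,a]`. -/
abbrev A : Type := MvPolynomial (Fin 3) ℤ

/-- The ring of formal power series `ℤ[u,v,a][[z]]`. -/
abbrev S : Type := PowerSeries A

/-- The series variable `z` (conjugate to the length). -/
noncomputable def zS : S := PowerSeries.X

/-- The catalytic variable `u`. -/
noncomputable def uS : S := PowerSeries.C (R := A) (MvPolynomial.X 0)

/-- The catalytic variable `v`. -/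
noncomputable def vS : S := PowerSeries.C (R := A) (MvPolynomial.X 1)

/-- The surface fugacity `a`. -/
noncomputable def aS : S := PowerSeries.C (R := A) (MvPolynomial.X 2)

/-- Generating function `Σ c(n,i,j,ν) zⁿ Uⁱ Vʲ aᵛ` of a family of counts, with
the catalytic variables evaluated at power series `U`, `V`.  (Counts of `n`-step
walks vanish unless `i,j,ν ≤ n`, so the inner sums may be truncated at `n`, and
the coefficient of `zᵐ` only receives contributions from `n ≤ m`.) -/
noncomputable def gf2 (c : ℕ → ℕ → ℕ → ℕ → ℕ) (U V : S) : S :=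
  PowerSeries.mk fun m =>
    PowerSeries.coeff (R := A) m <|
      ∑ n ∈ Finset.range (m + 1), (PowerSeries.X : S) ^ n *
        ∑ i ∈ Finset.range (n + 1), ∑ j ∈ Finset.range (n + 1),
          ∑ ν ∈ Finset.range (n + 1),
            (c n i j ν : S) * U ^ i * V ^ j * aS ^ ν

/-- `R(U,V)`, the generating function of 2-sided prudent walks above the
surface ending on the right side of their bounding box. -/
noncomputable def Rgf (U V : S) : S := gf2 Rcount U V

/-- `T(U,V)`, the generating function of 2-sided prudent walks above the
surface ending on the top side of their bounding box. -/
noncomputable def Tgf (U V : S) : S := gf2 Tcount U V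

/-- `W(U,V)`, the generating function of all 2-sided prudent walks above the
surface, with `U` marking the distance from the endpoint to the NE corner. -/
noncomputable def Wgf (U V : S) : S := gf2 Wcount U V

/-- `c(v) = 1 + z² − zv + z³v`, so that the kernel quadratic is
`zX² − c(v)X + z = 0`. -/
noncomputable def ck (V : S) : S := 1 + zS ^ 2 - zS * V + zS ^ 3 * V

/-- `λ(v)`: the unique formal power series root of `zX² − c(v)X + z = 0`
(defined as `0` if no such root exists). -/
noncomputable def lam (V : S) : S :=
  open scoped Classical in
  if h : ∃ X : S, zS * X ^ 2 - ck V * X + zS = 0 then h.choose else 0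

/-- `Λ = λ(1)`. -/
noncomputable def Lam : S := lam 1

/-- Numerator of the kernel `L(u,v) = 1 − zuv(1−z²)/((u−z)(1−zu))` after
clearing the denominator `(u−z)(1−zu)`. -/
noncomputable def Ln (U V : S) : S := (U - zS) * (1 - zS * U) - zS * U * V * (1 - zS ^ 2)

/-- Numerator of the kernel `M(u,v) = 1 − zuv(1−z²)/((v−zu)(u−zv))` after
clearing the denominator `(v−zu)(u−zv)`. -/
noncomputable def Mn (U V : S) : S := (V - zS * U) * (U - zS * V) - zS * U * V * (1 - zS ^ 2)

/-- Numerator of `A(u,v)`. -/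
noncomputable def An (U V : S) : S :=
  V * (U - zS ^ 2 * U - zS * U * lam V * aS + zS ^ 2 * V * lam V * aS)

/-- Denominator of `A(u,v)`, namely `(u−zv)(v−zu)(1−zλ(v)a)`. -/
noncomputable def Ad (U V : S) : S := (U - zS * V) * (V - zS * U) * (1 - zS * lam V * aS)

/-- Numerator of `B(u,v)`. -/
noncomputable def Bn (U V : S) : S :=
  -(zS * U) * (U + V - zS * V - zS ^ 2 * V - V * aS + zS ^ 2 * V * aS)

/-- Denominator of `B(u,v)`, namely `(u−zv)(v−zu)`. -/
noncomputable def Bd (U V : S) : S := (U - zS * V) * (V - zS * U)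

/-- Numerator of `C(u,v)`. -/
noncomputable def Cn (U V : S) : S := -(zS * V) * (zS * U - U * lam V + zS * V * lam V)

/-- Denominator of `C(u,v)`, namely `(λ(v)−z)(u−zv)`. -/
noncomputable def Cd (U V : S) : S := (lam V - zS) * (U - zS * V)

/-- `𝒥(a) = 1 + Λ − zΛ − z²Λ − Λa + z²Λa`. -/
noncomputable def Jc : S := 1 + Lam - zS * Lam - zS ^ 2 * Lam - Lam * aS + zS ^ 2 * Lam * aS

/-- Numerator of `ℋ(q)`. -/
noncomputable def Hnum (q : S) : S :=
  (1 - zS ^ 2) * (1 - Lam ^ 2) *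
    (1 - zS * aS * (1 + zS) * lam (q * Lam) + zS * aS * lam (q * Lam) ^ 2)

/-- Denominator of `ℋ(q)`, including the factor `𝒥(a)`. -/
noncomputable def Hden (q : S) : S :=
  Jc * ((1 - zS * Lam) * (1 - zS * aS * lam (q * Lam)) *
    (1 - (1 - zS - zS ^ 2 + Lam) * lam (q * Lam)))

/-- Numerator of `ℐ(q)`. -/
noncomputable def Inum (q : S) : S :=
  (Lam - zS) * (1 - zS - zS ^ 2 - aS + zS ^ 2 * aS + Lam) *
    (zS - (1 - zS * Lam) * lam (q * Lam))

/-- Denominator of `ℐ(q)`, including the factor `𝒥(a)`. -/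
noncomputable def Iden (q : S) : S :=
  Jc * (zS * (1 - zS * Lam) * (1 - (1 - zS - zS ^ 2 + Lam) * lam (q * Lam)))

end PrudentAdsorption


namespace PrudentAdsorption

noncomputable def dd (V : S) : S := V - zS - zS ^ 2 * V

lemma ck_eq (V : S) : ck V = 1 - zS * dd V := by unfold ck dd; ring

noncomputable def lamC (V : S) : ℕ → A
  | 0 => 0
  | (n + 1) =>
      (if n = 0 then 1 else 0)
      + ∑ p ∈ (Finset.HasAntidiagonal.antidiagonal n).attach,
          lamC V p.1.1 * lamC V p.1.2
      + ∑ p ∈ (Finset.HasAntidiagonal.antidiagonal n).attach,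
          PowerSeries.coeff (R := A) p.1.1 (dd V) * lamC V p.1.2
  termination_by n => n
  decreasing_by
  · have := Finset.HasAntidiagonal.antidiagonal.fst_le p.2; omega
  · have := Finset.HasAntidiagonal.antidiagonal.snd_le p.2; omega
  · have := Finset.HasAntidiagonal.antidiagonal.snd_le p.2; omega

lemma lamC_succ (V : S) (n : ℕ) :
    lamC V (n + 1) =
      (if n = 0 then 1 else 0)
      + ∑ p ∈ Finset.HasAntidiagonal.antidiagonal n, lamC V p.1 * lamC V p.2
      + ∑ p ∈ Finset.HasAntidiagonal.antidiagonal n, PowerSeries.coeff (R := A) p.1 (dd V) * lamC V p.2 := by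
  rw [lamC]
  rw [Finset.sum_attach (Finset.HasAntidiagonal.antidiagonal n) (fun p => lamC V p.1 * lamC V p.2),
    Finset.sum_attach (Finset.HasAntidiagonal.antidiagonal n) (fun p => PowerSeries.coeff (R := A) p.1 (dd V) * lamC V p.2)]

lemma mk_lamC_eq (V : S) :
    PowerSeries.mk (lamC V) = zS + zS * (PowerSeries.mk (lamC V)) ^ 2
      + zS * (dd V * PowerSeries.mk (lamC V)) := by
  ext n
  cases n with
  | zero =>
      simp [lamC, zS, PowerSeries.coeff_zero_eq_constantCoeff]
  | succ n =>
      rw [PowerSeries.coeff_mk, lamC_succ, map_add, map_add, zS,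
        PowerSeries.coeff_succ_X_mul, PowerSeries.coeff_succ_X_mul, PowerSeries.coeff_X,
        sq, PowerSeries.coeff_mul, PowerSeries.coeff_mul]
      simp [PowerSeries.coeff_mk]

lemma root_exists (V : S) : ∃ X : S, zS * X ^ 2 - ck V * X + zS = 0 := by
  refine ⟨PowerSeries.mk (lamC V), ?_⟩
  have h := mk_lamC_eq V
  rw [ck_eq]
  linear_combination -h

lemma root_unique {V X Y : S} (hX : zS * X ^ 2 - ck V * X + zS = 0)
    (hY : zS * Y ^ 2 - ck V * Y + zS = 0) : X = Y := by
  have h : (X - Y) * (zS * (X + Y) - ck V) = 0 := by linear_combination hX - hY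
  rcases mul_eq_zero.1 h with h1 | h2
  · exact sub_eq_zero.1 h1
  · exfalso
    have := congrArg (PowerSeries.constantCoeff (R := A)) h2
    simp [zS, ck, map_sub, map_add, map_mul] at this

lemma lam_eq (V : S) : lam V = PowerSeries.mk (lamC V) := by
  rw [lam, dif_pos (root_exists V)]
  exact root_unique (root_exists V).choose_spec (by { have h := mk_lamC_eq V; rw [ck_eq]; linear_combination -h })

lemma coeff_lam (V : S) (n : ℕ) : PowerSeries.coeff (R := A) n (lam V) = lamC V n := by
  rw [lam_eq, PowerSeries.coeff_mk]

lemma lamC_zero (V : S) : lamC V 0 = 0 := by rw [lamC]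

lemma sum_ad (n : ℕ) (f : ℕ × ℕ → A) :
    ∑ p ∈ Finset.HasAntidiagonal.antidiagonal n, f p = ∑ i ∈ Finset.range (n + 1), f (i, n - i) :=
  Finset.Nat.sum_antidiagonal_eq_sum_range_succ_mk f n

lemma coeff_dd_one (k : ℕ) : PowerSeries.coeff (R := A) k (dd 1) =
    (if k = 0 then 1 else 0) - (if k = 1 then 1 else 0) - (if k = 2 then 1 else 0) := by
  rw [dd]
  simp [zS, PowerSeries.coeff_X_pow, PowerSeries.coeff_one, PowerSeries.coeff_X]

lemma lamC_one_1 : lamC 1 1 = 1 := by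
  rw [lamC_succ, sum_ad, sum_ad]
  simp [Finset.sum_range_succ, lamC_zero]

lemma lamC_one_2 : lamC 1 2 = 1 := by
  rw [lamC_succ, sum_ad, sum_ad]
  simp [Finset.sum_range_succ, lamC_zero, lamC_one_1, coeff_dd_one]

lemma coeff_Lam_0 : PowerSeries.coeff (R := A) 0 Lam = 0 := by rw [Lam, coeff_lam, lamC_zero]
lemma coeff_Lam_1 : PowerSeries.coeff (R := A) 1 Lam = 1 := by rw [Lam, coeff_lam, lamC_one_1]
lemma coeff_Lam_2 : PowerSeries.coeff (R := A) 2 Lam = 1 := by rw [Lam, coeff_lam, lamC_one_2]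

local notation "u" => (MvPolynomial.X 0 : A)
local notation "a" => (MvPolynomial.X 2 : A)


lemma coeff_zsq_mul_lt (f : S) (k : ℕ) (h : k < 2) :
    PowerSeries.coeff (R := A) k (zS ^ 2 * f) = 0 := by
  rw [PowerSeries.coeff_mul]
  apply Finset.sum_eq_zero
  intro p hp
  rw [Finset.HasAntidiagonal.mem_antidiagonal] at hp
  rw [zS, PowerSeries.coeff_X_pow]
  have : p.1 ≠ 2 := by omega
  simp [this]

lemma coeff_zsq_mul (f : S) (k : ℕ) :
    PowerSeries.coeff (R := A) (k + 2) (zS ^ 2 * f) = PowerSeries.coeff (R := A) k f := by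
  rw [zS]
  exact PowerSeries.coeff_X_pow_mul f 2 k

noncomputable def lamU : S := lam (uS * Lam)

lemma coeff_uLam (k : ℕ) : PowerSeries.coeff (R := A) k (uS * Lam) = u * PowerSeries.coeff (R := A) k Lam := by
  rw [uS, PowerSeries.coeff_C_mul]

lemma coeff_dd_uLam_0 : PowerSeries.coeff (R := A) 0 (dd (uS * Lam)) = 0 := by
  rw [dd]
  rw [map_sub, map_sub, coeff_uLam, coeff_Lam_0]
  have h2 := coeff_zsq_mul_lt (uS * Lam) 0 (by norm_num)
  rw [h2, zS, PowerSeries.coeff_X]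
  simp

lemma coeff_dd_uLam_1 : PowerSeries.coeff (R := A) 1 (dd (uS * Lam)) = u - 1 := by
  rw [dd]
  rw [map_sub, map_sub, coeff_uLam, coeff_Lam_1]
  have h2 := coeff_zsq_mul_lt (uS * Lam) 1 (by norm_num)
  rw [h2, zS, PowerSeries.coeff_X]
  simp

lemma coeff_dd_uLam_2 : PowerSeries.coeff (R := A) 2 (dd (uS * Lam)) = u := by
  rw [dd]
  rw [map_sub, map_sub, coeff_uLam, coeff_Lam_2]
  have h2 : PowerSeries.coeff (R := A) 2 (zS ^ 2 * (uS * Lam)) = 0 := by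
    have := coeff_zsq_mul (uS * Lam) 0
    rw [coeff_uLam, coeff_Lam_0, mul_zero] at this
    simpa using this
  rw [h2, zS, PowerSeries.coeff_X]
  simp

lemma lamC_one_any (V : S) : lamC V 1 = 1 := by
  rw [lamC_succ, sum_ad, sum_ad]
  simp [Finset.sum_range_succ, lamC_zero]

lemma coeff_lamU_0 : PowerSeries.coeff (R := A) 0 lamU = 0 := by rw [lamU, coeff_lam, lamC_zero]
lemma coeff_lamU_1 : PowerSeries.coeff (R := A) 1 lamU = 1 := by rw [lamU, coeff_lam, lamC_one_any]

lemma coeff_lamU_2 : PowerSeries.coeff (R := A) 2 lamU = 0 := by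
  rw [lamU, coeff_lam]
  rw [show (2:ℕ) = 1 + 1 from rfl, lamC_succ, sum_ad, sum_ad]
  simp [Finset.sum_range_succ, lamC_zero, lamC_one_any, coeff_dd_uLam_0]

lemma coeff_lamU_3 : PowerSeries.coeff (R := A) 3 lamU = u := by
  rw [lamU, coeff_lam]
  show lamC (uS * Lam) (2 + 1) = u
  rw [lamC_succ, sum_ad, sum_ad]
  have h2 : lamC (uS * Lam) 2 = 0 := by
    rw [show (2:ℕ) = 1 + 1 from rfl, lamC_succ, sum_ad, sum_ad]
    simp [Finset.sum_range_succ, lamC_zero, lamC_one_any, coeff_dd_uLam_0]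
  simp [Finset.sum_range_succ, lamC_zero, lamC_one_any, h2,
    coeff_dd_uLam_0, coeff_dd_uLam_1, coeff_dd_uLam_2]

lemma cmul (f g : S) (n : ℕ) :
    PowerSeries.coeff (R := A) n (f * g) = ∑ i ∈ Finset.range (n + 1),
      PowerSeries.coeff (R := A) i f * PowerSeries.coeff (R := A) (n - i) g := by
  rw [PowerSeries.coeff_mul, Finset.Nat.sum_antidiagonal_eq_sum_range_succ_mk]

lemma ccoeff_lam (V : S) : PowerSeries.constantCoeff (R := A) (lam V) = 0 := by
  rw [← PowerSeries.coeff_zero_eq_constantCoeff, coeff_lam, lamC_zero]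

lemma ccoeff_Lam : PowerSeries.constantCoeff (R := A) Lam = 0 := ccoeff_lam 1

lemma ccoeff_lamU : PowerSeries.constantCoeff (R := A) lamU = 0 := ccoeff_lam _

lemma coeff_Jc_0 : PowerSeries.coeff (R := A) 0 Jc = 1 := by
  simp [Jc, cmul, Finset.sum_range_succ, zS, aS, PowerSeries.coeff_X,
    PowerSeries.coeff_one, PowerSeries.coeff_C, PowerSeries.coeff_X_pow,
    coeff_Lam_0, ccoeff_Lam]

lemma coeff_Jc_1 : PowerSeries.coeff (R := A) 1 Jc = 1 - a := by
  simp [Jc, cmul, Finset.sum_range_succ, zS, aS, PowerSeries.coeff_X,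
    PowerSeries.coeff_one, PowerSeries.coeff_C, PowerSeries.coeff_X_pow,
    coeff_Lam_0, coeff_Lam_1, ccoeff_Lam]

lemma ccoeff_Jc : PowerSeries.constantCoeff (R := A) Jc = 1 := by
  rw [← PowerSeries.coeff_zero_eq_constantCoeff]; exact coeff_Jc_0

lemma lamU_eq : lam (uS * Lam) = lamU := rfl

lemma coeff_Hden_0 : PowerSeries.coeff (R := A) 0 (Hden uS) = 1 := by
  simp [Hden, lamU_eq, cmul, Finset.sum_range_succ, zS, aS, PowerSeries.coeff_X,
    PowerSeries.coeff_one, PowerSeries.coeff_C, PowerSeries.coeff_X_pow,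
    ccoeff_Lam, ccoeff_lamU, ccoeff_Jc]

lemma coeff_Hden_1 : PowerSeries.coeff (R := A) 1 (Hden uS) = -a := by
  simp [Hden, lamU_eq, cmul, Finset.sum_range_succ, zS, aS, PowerSeries.coeff_X,
    PowerSeries.coeff_one, PowerSeries.coeff_C, PowerSeries.coeff_X_pow,
    ccoeff_Lam, ccoeff_lamU, ccoeff_Jc, coeff_Jc_1, coeff_Lam_1, coeff_lamU_1]
  ring

lemma coeff_Hnum_0 : PowerSeries.coeff (R := A) 0 (Hnum uS) = 1 := by
  simp [Hnum, lamU_eq, cmul, Finset.sum_range_succ, zS, aS, PowerSeries.coeff_X,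
    PowerSeries.coeff_one, PowerSeries.coeff_C, PowerSeries.coeff_X_pow,
    ccoeff_Lam, ccoeff_lamU]

lemma coeff_Hnum_1 : PowerSeries.coeff (R := A) 1 (Hnum uS) = 0 := by
  simp [Hnum, lamU_eq, pow_two, cmul, Finset.sum_range_succ, zS, aS, PowerSeries.coeff_X,
    PowerSeries.coeff_one, PowerSeries.coeff_C, PowerSeries.coeff_X_pow,
    ccoeff_Lam, ccoeff_lamU, coeff_Lam_1, coeff_lamU_1]

lemma coeff_lam_one (W : S) : PowerSeries.coeff (R := A) 1 (lam W) = 1 := by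
  rw [coeff_lam, lamC_one_any]

lemma coeff_Iden_0 (q : S) : PowerSeries.coeff (R := A) 0 (Iden q) = 0 := by
  simp [Iden, cmul, Finset.sum_range_succ, zS, aS, PowerSeries.coeff_X,
    PowerSeries.coeff_one, PowerSeries.coeff_C, PowerSeries.coeff_X_pow,
    ccoeff_Lam, ccoeff_lam, ccoeff_Jc]

lemma coeff_Iden_1 (q : S) : PowerSeries.coeff (R := A) 1 (Iden q) = 1 := by
  simp [Iden, cmul, Finset.sum_range_succ, zS, aS, PowerSeries.coeff_X,
    PowerSeries.coeff_one, PowerSeries.coeff_C, PowerSeries.coeff_X_pow,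
    ccoeff_Lam, ccoeff_lam, ccoeff_Jc, coeff_Jc_1, coeff_Lam_1, coeff_lam_one]

lemma coeff_Inum_0 (q : S) : PowerSeries.coeff (R := A) 0 (Inum q) = 0 := by
  simp [Inum, cmul, Finset.sum_range_succ, zS, aS, PowerSeries.coeff_X,
    PowerSeries.coeff_one, PowerSeries.coeff_C, PowerSeries.coeff_X_pow,
    ccoeff_Lam, ccoeff_lam]

lemma coeff_Inum_1 (q : S) : PowerSeries.coeff (R := A) 1 (Inum q) = 0 := by
  simp [Inum, cmul, Finset.sum_range_succ, zS, aS, PowerSeries.coeff_X,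
    PowerSeries.coeff_one, PowerSeries.coeff_C, PowerSeries.coeff_X_pow,
    ccoeff_Lam, ccoeff_lam, coeff_Lam_1, coeff_lam_one]

lemma coeff_Inum_2 : PowerSeries.coeff (R := A) 2 (Inum uS) = 0 := by
  simp [Inum, lamU_eq, cmul, Finset.sum_range_succ, zS, aS, PowerSeries.coeff_X,
    PowerSeries.coeff_one, PowerSeries.coeff_C, PowerSeries.coeff_X_pow,
    ccoeff_Lam, ccoeff_lamU, coeff_Lam_1, coeff_Lam_2, coeff_lamU_1, coeff_lamU_2]

lemma coeff_Inum_3 : PowerSeries.coeff (R := A) 3 (Inum uS) = 0 := by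
  simp [Inum, lamU_eq, cmul, Finset.sum_range_succ, zS, aS, PowerSeries.coeff_X,
    PowerSeries.coeff_one, PowerSeries.coeff_C, PowerSeries.coeff_X_pow,
    ccoeff_Lam, ccoeff_lamU, coeff_Lam_1, coeff_Lam_2, coeff_lamU_1, coeff_lamU_2,
    coeff_lamU_3]

lemma coeff_Inum_4 : PowerSeries.coeff (R := A) 4 (Inum uS) = 0 := by
  simp [Inum, lamU_eq, cmul, Finset.sum_range_succ, zS, aS, PowerSeries.coeff_X,
    PowerSeries.coeff_one, PowerSeries.coeff_C, PowerSeries.coeff_X_pow,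
    ccoeff_Lam, ccoeff_lamU, coeff_Lam_1, coeff_Lam_2, coeff_lamU_1, coeff_lamU_2,
    coeff_lamU_3]

lemma coeff_Inum_5 : PowerSeries.coeff (R := A) 5 (Inum uS) = 1 - a - u + u * a := by
  simp [Inum, lamU_eq, cmul, Finset.sum_range_succ, zS, aS, PowerSeries.coeff_X,
    PowerSeries.coeff_one, PowerSeries.coeff_C, PowerSeries.coeff_X_pow,
    ccoeff_Lam, ccoeff_lamU, coeff_Lam_1, coeff_Lam_2, coeff_lamU_1, coeff_lamU_2,
    coeff_lamU_3]
  ring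


/-- `ℋ(u)` is a formal power series in `z` with coefficients
in `ℤ[u,a]` of the form `1 + za + O(z²)`, and `ℐ(u)` is of the form
`z⁴(1 − a − u + ua) + O(z⁵)`; consequently the partial sums of
`Σ_{n≥0} ℋ(uΛ^{2n}) Π_{k<n} ℐ(uΛ^{2k})` stabilise coefficientwise, i.e. the sum
converges as a formal power series.  Here `Hf`, `If` denote the series `ℋ`,
`ℐ`, characterised by the cleared-denominator identities. -/
theorem H_I_orders_and_convergence (Hf If : S → S)
    (hH : ∀ q : S, Hden q * Hf q = Hnum q)
    (hI : ∀ q : S, Iden q * If q = Inum q) :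
    PowerSeries.coeff (R := A) 0 (Hf uS) = 1 ∧
    PowerSeries.coeff (R := A) 1 (Hf uS) = MvPolynomial.X 2 ∧
    (∀ k : ℕ, k < 4 → PowerSeries.coeff (R := A) k (If uS) = 0) ∧
    PowerSeries.coeff (R := A) 4 (If uS)
      = 1 - MvPolynomial.X 2 - MvPolynomial.X 0 +
          MvPolynomial.X 0 * MvPolynomial.X 2 ∧
    (∀ m N : ℕ, m ≤ N →
      PowerSeries.coeff (R := A) m (∑ n ∈ Finset.range (N + 1),
          Hf (uS * Lam ^ (2 * n)) * ∏ k ∈ Finset.range n, If (uS * Lam ^ (2 * k)))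
        = PowerSeries.coeff (R := A) m (∑ n ∈ Finset.range (m + 1),
          Hf (uS * Lam ^ (2 * n)) * ∏ k ∈ Finset.range n, If (uS * Lam ^ (2 * k)))) := by
  -- coefficient 0 of Hf uS
  have hH0 : PowerSeries.coeff (R := A) 0 (Hf uS) = 1 := by
    have h := congrArg (PowerSeries.coeff (R := A) 0) (hH uS)
    rw [cmul] at h
    simpa [Finset.sum_range_succ, coeff_Hden_0, coeff_Hnum_0] using h
  have hH1 : PowerSeries.coeff (R := A) 1 (Hf uS) = a := by
    have h := congrArg (PowerSeries.coeff (R := A) 1) (hH uS)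
    rw [cmul] at h
    simp [Finset.sum_range_succ, coeff_Hden_0, coeff_Hden_1, coeff_Hnum_1, hH0] at h
    linear_combination h
  -- generic constant coefficient of If q
  have hIf0 : ∀ q : S, PowerSeries.coeff (R := A) 0 (If q) = 0 := by
    intro q
    have h := congrArg (PowerSeries.coeff (R := A) 1) (hI q)
    rw [cmul] at h
    simpa [Finset.sum_range_succ, coeff_Iden_0, coeff_Iden_1, coeff_Inum_1] using h
  have hIf1 : PowerSeries.coeff (R := A) 1 (If uS) = 0 := by
    have h := congrArg (PowerSeries.coeff (R := A) 2) (hI uS)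
    rw [cmul] at h
    simpa [Finset.sum_range_succ, coeff_Iden_0, coeff_Iden_1, coeff_Inum_2, hIf0] using h
  have hIf2 : PowerSeries.coeff (R := A) 2 (If uS) = 0 := by
    have h := congrArg (PowerSeries.coeff (R := A) 3) (hI uS)
    rw [cmul] at h
    simpa [Finset.sum_range_succ, coeff_Iden_0, coeff_Iden_1, coeff_Inum_3, hIf0, hIf1] using h
  have hIf3 : PowerSeries.coeff (R := A) 3 (If uS) = 0 := by
    have h := congrArg (PowerSeries.coeff (R := A) 4) (hI uS)
    rw [cmul] at h
    simpa [Finset.sum_range_succ, coeff_Iden_0, coeff_Iden_1, coeff_Inum_4, hIf0, hIf1, hIf2] using h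
  have hIf4 : PowerSeries.coeff (R := A) 4 (If uS) = 1 - a - u + u * a := by
    have h := congrArg (PowerSeries.coeff (R := A) 5) (hI uS)
    rw [cmul] at h
    simpa [Finset.sum_range_succ, coeff_Iden_0, coeff_Iden_1, coeff_Inum_5,
      hIf0, hIf1, hIf2, hIf3] using h
  refine ⟨hH0, hH1, ?_, by rw [hIf4], ?_⟩
  · intro k hk
    interval_cases k
    · exact hIf0 uS
    · exact hIf1
    · exact hIf2
    · exact hIf3
  · intro m N hmN
    rw [← Finset.sum_range_add_sum_Ico _ (Nat.succ_le_succ hmN), map_add]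
    have hz : PowerSeries.coeff (R := A) m (∑ n ∈ Finset.Ico (m + 1) (N + 1),
        Hf (uS * Lam ^ (2 * n)) * ∏ k ∈ Finset.range n, If (uS * Lam ^ (2 * k))) = 0 := by
      rw [map_sum]
      apply Finset.sum_eq_zero
      intro n hn
      rw [Finset.mem_Ico] at hn
      have hdvd : (PowerSeries.X : S) ^ n ∣
          Hf (uS * Lam ^ (2 * n)) * ∏ k ∈ Finset.range n, If (uS * Lam ^ (2 * k)) := by
        apply Dvd.dvd.mul_left
        have : (PowerSeries.X : S) ^ n = ∏ _k ∈ Finset.range n, PowerSeries.X := by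
          simp
        rw [this]
        apply Finset.prod_dvd_prod_of_dvd
        intro k _
        rw [PowerSeries.X_dvd_iff, ← PowerSeries.coeff_zero_eq_constantCoeff]
        exact hIf0 _
      exact PowerSeries.X_pow_dvd_iff.1 hdvd m (by omega)
    rw [hz, add_zero]


end PrudentAdsorption
end

section
/- For every n ≥ 0, with Λ the unique formal power series root of zX² − (1 − z + z² + z³)X + z = 0, the coefficient B(z; Λⁿ, Λⁿ⁺¹; a) = −zΛⁿ(Λⁿ + Λⁿ⁺¹ − zΛⁿ⁺¹ − z²Λⁿ⁺¹ − Λⁿ⁺¹a + z²Λⁿ⁺¹a)/((Λⁿ − zΛⁿ⁺¹)(Λⁿ⁺¹ − zΛⁿ)) equals −z·𝒥(a)/((1 − zΛ)(Λ − z)), independently of n; in particular B(z; Λⁿ, Λⁿ⁺¹; a) vanishes exactly when 𝒥(a) = 1 + Λ − zΛ − z²Λ − Λa + z²Λa vanishes. -/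
namespace PrudentAdsorption

open PowerSeries

/-- Inverse of `ck 1 = 1 - z + z² + z³` (a unit of `S`). -/
noncomputable def ckinv : S := PowerSeries.invOfUnit (ck 1) 1

lemma ck_one_mul_ckinv : ck 1 * ckinv = 1 := by
  refine PowerSeries.mul_invOfUnit _ _ ?_
  simp [ck, zS]

/-- The contraction `F Y = z·ck(1)⁻¹·(1 + Y²)` whose fixed point is `Λ`. -/
noncomputable def Fc (f : S) : S := zS * (ckinv * (1 + f ^ 2))

/-- Iterates of the contraction. -/
noncomputable def Yseq : ℕ → S
  | 0 => 0
  | k + 1 => Fc (Yseq k)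

/-- Congruence modulo `X^n`. -/
def Em (n : ℕ) (f h : S) : Prop :=
  ∀ i < n, PowerSeries.coeff (R := A) i f = PowerSeries.coeff (R := A) i h

lemma Em_refl (n : ℕ) (f : S) : Em n f f := fun _ _ => rfl

lemma Em_trans {n : ℕ} {f g h : S} (h1 : Em n f g) (h2 : Em n g h) : Em n f h :=
  fun i hi => (h1 i hi).trans (h2 i hi)

lemma Em_mono {m n : ℕ} (hmn : m ≤ n) {f h : S} (hf : Em n f h) : Em m f h :=
  fun i hi => hf i (lt_of_lt_of_le hi hmn)

lemma Em_add {n : ℕ} {f f' h h' : S} (hf : Em n f f') (hh : Em n h h') :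
    Em n (f + h) (f' + h') := by
  intro i hi
  simp only [map_add, hf i hi, hh i hi]

lemma Em_mul {n : ℕ} {f f' h h' : S} (hf : Em n f f') (hh : Em n h h') :
    Em n (f * h) (f' * h') := by
  intro i hi
  simp only [PowerSeries.coeff_mul]
  refine Finset.sum_congr rfl fun p hp => ?_
  rw [Finset.HasAntidiagonal.mem_antidiagonal] at hp
  rw [hf p.1 (by omega), hh p.2 (by omega)]

lemma Em_Xmul {n : ℕ} {f h : S} (hf : Em n f h) : Em (n + 1) (zS * f) (zS * h) := by
  intro i hi
  cases i with
  | zero => simp [zS]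
  | succ j =>
      rw [zS, PowerSeries.coeff_succ_X_mul, PowerSeries.coeff_succ_X_mul]
      exact hf j (by omega)

lemma Em_Fc {n : ℕ} {f h : S} (hf : Em n f h) : Em (n + 1) (Fc f) (Fc h) := by
  unfold Fc
  refine Em_Xmul (Em_mul (Em_refl n ckinv) (Em_add (Em_refl n 1) ?_))
  rw [sq f, sq h]
  exact Em_mul hf hf

lemma Em_step (k : ℕ) : Em k (Yseq k) (Yseq (k + 1)) := by
  induction k with
  | zero => intro i hi; omega
  | succ k ih => exact Em_Fc ih

lemma Em_stab (k m : ℕ) : Em k (Yseq k) (Yseq (k + m)) := by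
  induction m with
  | zero => exact Em_refl _ _
  | succ m ih =>
      exact Em_trans ih (Em_mono (Nat.le_add_right k m) (Em_step (k + m)))

/-- The limit of the iterates. -/
noncomputable def Lroot : S := PowerSeries.mk fun n => PowerSeries.coeff (R := A) n (Yseq (n + 1))

lemma Em_Lroot (n : ℕ) : Em n Lroot (Yseq n) := by
  intro i hi
  rw [Lroot, PowerSeries.coeff_mk]
  have h : i + 1 + (n - i - 1) = n := by omega
  have := Em_stab (i + 1) (n - i - 1) i (by omega)
  rwa [h] at this

lemma Fc_Lroot : Fc Lroot = Lroot := by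
  ext n
  have h1 : PowerSeries.coeff (R := A) n (Fc Lroot) = PowerSeries.coeff (R := A) n (Fc (Yseq n)) :=
    Em_Fc (Em_Lroot n) n (by omega)
  rw [h1]
  rw [Lroot, PowerSeries.coeff_mk]
  rfl

lemma Lroot_root : zS * Lroot ^ 2 - ck 1 * Lroot + zS = 0 := by
  have h1 : ck 1 * Lroot = zS * (1 + Lroot ^ 2) := by
    conv_lhs => rw [← Fc_Lroot]
    unfold Fc
    calc ck 1 * (zS * (ckinv * (1 + Lroot ^ 2)))
        = (ck 1 * ckinv) * (zS * (1 + Lroot ^ 2)) := by ring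
      _ = zS * (1 + Lroot ^ 2) := by rw [ck_one_mul_ckinv, one_mul]
  linear_combination -h1

lemma lam_one_exists : ∃ X : S, zS * X ^ 2 - ck 1 * X + zS = 0 := ⟨Lroot, Lroot_root⟩

lemma Lam_root : zS * Lam ^ 2 - ck 1 * Lam + zS = 0 := by
  rw [Lam, lam, dif_pos lam_one_exists]
  exact lam_one_exists.choose_spec

lemma zS_ne_zero : zS ≠ 0 := PowerSeries.X_ne_zero

lemma Lam_ne_zero : Lam ≠ 0 := by
  intro h
  have := Lam_root
  rw [h] at this
  simp only [mul_zero, ne_eq, zero_pow, sub_zero, zero_add] at this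
  exact zS_ne_zero (by linear_combination this)

end PrudentAdsorption

namespace PrudentAdsorption

/-- For every `n ≥ 0`, the coefficient
`B(z;Λⁿ,Λⁿ⁺¹;a) = −zΛⁿ(Λⁿ + Λⁿ⁺¹ − zΛⁿ⁺¹ − z²Λⁿ⁺¹ − Λⁿ⁺¹a + z²Λⁿ⁺¹a)
/((Λⁿ−zΛⁿ⁺¹)(Λⁿ⁺¹−zΛⁿ))` equals `−z·𝒥(a)/((1−zΛ)(Λ−z))`, independently of `n`
(stated after clearing the denominators); in particular its numerator
`Bn(Λⁿ,Λⁿ⁺¹)` vanishes exactly when `𝒥(a) = 1+Λ−zΛ−z²Λ−Λa+z²Λa` vanishes. -/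
theorem B_at_lambda_iterates (n : ℕ) :
    Bn (Lam ^ n) (Lam ^ (n + 1)) * ((1 - zS * Lam) * (Lam - zS))
      = -(zS * Jc) * Bd (Lam ^ n) (Lam ^ (n + 1)) ∧
    (Bn (Lam ^ n) (Lam ^ (n + 1)) = 0 ↔ Jc = 0) := by
  constructor
  · simp only [Bn, Bd, Jc, pow_succ]
    ring
  · have key : Bn (Lam ^ n) (Lam ^ (n + 1)) = -(zS * Lam ^ n * Lam ^ n) * Jc := by
      simp only [Bn, Jc, pow_succ]
      ring
    rw [key]
    constructor
    · intro h
      rcases mul_eq_zero.mp h with h | h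
      · exfalso
        rw [neg_eq_zero] at h
        rcases mul_eq_zero.mp h with h | h
        · rcases mul_eq_zero.mp h with h | h
          · exact zS_ne_zero h
          · exact pow_ne_zero n Lam_ne_zero h
        · exact pow_ne_zero n Lam_ne_zero h
      · exact h
    · intro h
      rw [h, mul_zero]


end PrudentAdsorption
end
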